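/- Work in ℝᵐ with the Euclidean norm. Let Ψ, ψ : ℝᵐ → ℝ be convex and differentiable with ∇Ψ Lipschitz of constant L_F and ∇ψ Lipschitz of constant L_f. Let Y ⊆ ℝᵐ be nonempty, compact and convex, s_u ∈ (0, 1/L_F), s_l ∈ (0, 1/L_f), μ ∈ (0,1). Let α_k ∈ (0,1] be nonincreasing with α_k → 0 and ∑_k α_k = +∞, and β_k ∈ [β̲, 1] for some β̲ > 0. Starting from y₀ ∈ Y, define y_{k+1} = Proj_Y( y_k − ( μ α_k s_u ∇Ψ(y_k) + (1−μ) β_k s_l ∇ψ(y_k) ) ). Let S = argmin_{ℝᵐ} ψ, Ψ* = inf_{y ∈ Y ∩ S} Ψ(y), and Ŝ = { y ∈ Y ∩ S : Ψ(y) = Ψ* }. If Ŝ is nonempty, then dist(y_k, Ŝ) → 0 and Ψ(y_k) → Ψ* as k → ∞. -/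

import Mathlib

open Filter Topology Set Metric
open scoped RealInnerProductSpace
set_option linter.unusedSectionVars false

variable {E : Type*} [NormedAddCommGroup E] [InnerProductSpace ℝ E] [CompleteSpace E]

lemma lineDeriv' (f : E → ℝ) (f' : E → E) (hf : ∀ w, HasGradientAt f (f' w) w) (a b : E) (t : ℝ) :
    HasDerivAt (fun s : ℝ => f (a + s • (b - a))) ⟪f' (a + t • (b - a)), b - a⟫ t := by
  have hc : HasDerivAt (fun s : ℝ => a + s • (b - a)) (b - a) t := by
    simpa using ((hasDerivAt_id t).smul_const (b - a)).const_add a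
  have hF : HasFDerivAt f (InnerProductSpace.toDual ℝ E (f' (a + t • (b - a)))) (a + t • (b - a)) :=
    hasGradientAt_iff_hasFDerivAt.mp (hf _)
  have h := hF.comp_hasDerivAt t hc
  simp only [InnerProductSpace.toDual_apply_apply] at h
  exact h

lemma grad_ineq (f : E → ℝ) (f' : E → E) (hconv : ConvexOn ℝ univ f)
    (hf : ∀ w, HasGradientAt f (f' w) w) (a b : E) :
    f a + ⟪f' a, b - a⟫ ≤ f b := by
  have hg : ConvexOn ℝ univ (fun s : ℝ => f (a + s • (b - a))) := by
    have h := hconv.comp_affineMap (AffineMap.lineMap a b : ℝ →ᵃ[ℝ] E)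
    have h2 : (f ∘ ⇑(AffineMap.lineMap a b)) = fun s : ℝ => f (a + s • (b - a)) := by
      funext s
      simp only [Function.comp_apply, AffineMap.lineMap_apply_module']
      rw [add_comm]
    rw [h2] at h
    simpa using h
  have hd : HasDerivAt (fun s : ℝ => f (a + s • (b - a))) ⟪f' a, b - a⟫ 0 := by
    simpa using lineDeriv' f f' hf a b 0
  have hs := hg.le_slope_of_hasDerivAt (mem_univ (0:ℝ)) (mem_univ (1:ℝ)) one_pos hd
  have : slope (fun s : ℝ => f (a + s • (b - a))) 0 1 = f b - f a := by
    simp [slope_def_field, Field.div_eq_mul_inv]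
  rw [this] at hs
  linarith

lemma descent_lemma (f : E → ℝ) (f' : E → E) (L : ℝ)
    (hf : ∀ w, HasGradientAt f (f' w) w)
    (hlip : ∀ a b, ‖f' a - f' b‖ ≤ L * ‖a - b‖) (a b : E) :
    f b ≤ f a + ⟪f' a, b - a⟫ + L / 2 * ‖b - a‖ ^ 2 := by
  have hf'cont : Continuous f' := by
    have hlw : LipschitzWith (Real.toNNReal L) f' := by
      apply LipschitzWith.of_dist_le_mul
      intro x y
      rw [dist_eq_norm, dist_eq_norm]
      exact (hlip x y).trans (mul_le_mul_of_nonneg_right (Real.le_coe_toNNReal L) (norm_nonneg _))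
    exact hlw.continuous
  set g' : ℝ → ℝ := fun t => ⟪f' (a + t • (b - a)), b - a⟫ with hg'def
  have hg'cont : Continuous g' := by
    apply Continuous.inner _ continuous_const
    exact hf'cont.comp (continuous_const.add (continuous_id.smul continuous_const))
  have hderiv : ∀ t : ℝ, HasDerivAt (fun s : ℝ => f (a + s • (b - a))) (g' t) t :=
    fun t => lineDeriv' f f' hf a b t
  have hint : IntervalIntegrable g' MeasureTheory.volume 0 1 := hg'cont.intervalIntegrable 0 1
  have hftc : ∫ t in (0:ℝ)..1, g' t
      = f (a + (1:ℝ) • (b - a)) - f (a + (0:ℝ) • (b - a)) :=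
    intervalIntegral.integral_eq_sub_of_hasDerivAt (fun t _ => hderiv t) hint
  have he1 : a + (1:ℝ) • (b - a) = b := by simp
  have he0 : a + (0:ℝ) • (b - a) = a := by simp
  rw [he1, he0] at hftc
  set h : ℝ → ℝ := fun t => g' 0 + (L * ‖b - a‖ ^ 2) * t with hhdef
  have hhcont : Continuous h := by
    apply continuous_const.add
    exact continuous_const.mul continuous_id'
  have hmono : ∫ t in (0:ℝ)..1, g' t ≤ ∫ t in (0:ℝ)..1, h t := by
    apply intervalIntegral.integral_mono_on zero_le_one hint (hhcont.intervalIntegrable 0 1)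
    intro t ht
    have h1 : g' t - g' 0 = ⟪f' (a + t • (b - a)) - f' (a + (0:ℝ) • (b - a)), b - a⟫ := by
      rw [inner_sub_left]
    have h2 : ⟪f' (a + t • (b - a)) - f' (a + (0:ℝ) • (b - a)), b - a⟫
        ≤ ‖f' (a + t • (b - a)) - f' (a + (0:ℝ) • (b - a))‖ * ‖b - a‖ :=
      real_inner_le_norm _ _
    have h3 : ‖f' (a + t • (b - a)) - f' (a + (0:ℝ) • (b - a))‖
        ≤ L * (t * ‖b - a‖) := by
      have := hlip (a + t • (b - a)) (a + (0:ℝ) • (b - a))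
      have harg : (a + t • (b - a)) - (a + (0:ℝ) • (b - a)) = t • (b - a) := by
        simp
      rw [harg] at this
      rw [norm_smul] at this
      simpa [abs_of_nonneg ht.1] using this
    have hh : h t = g' 0 + (L * ‖b - a‖ ^ 2) * t := rfl
    nlinarith [mul_le_mul_of_nonneg_right h3 (norm_nonneg (b - a))]
  have hrhs : ∫ t in (0:ℝ)..1, h t = g' 0 + L * ‖b - a‖ ^ 2 / 2 := by
    rw [hhdef]
    show ∫ t in (0:ℝ)..1, (g' 0 + L * ‖b - a‖ ^ 2 * t) = _
    rw [intervalIntegral.integral_add (f := fun _ => g' 0) (g := fun t : ℝ => L * ‖b - a‖ ^ 2 * t)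
      intervalIntegrable_const
      ((continuous_const.mul continuous_id').intervalIntegrable 0 1)]
    rw [intervalIntegral.integral_const_mul]
    simp [integral_id]
    ring
  have hg'0 : g' 0 = ⟪f' a, b - a⟫ := by rw [hg'def]; simp
  rw [hg'0] at hrhs
  linarith [hmono.trans_eq hrhs, hftc.symm.trans_le (hmono.trans_eq hrhs)]

lemma grad_sq_le (f : E → ℝ) (f' : E → E) (L : ℝ) (hL : 0 < L)
    (hf : ∀ w, HasGradientAt f (f' w) w)
    (hlip : ∀ a b, ‖f' a - f' b‖ ≤ L * ‖a - b‖)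
    (ystar : E) (hmin : ∀ w, f ystar ≤ f w) (w : E) :
    ‖f' w‖ ^ 2 ≤ 2 * L * (f w - f ystar) := by
  have hd := descent_lemma f f' L hf hlip w (w - (1 / L) • f' w)
  have h1 : (w - (1 / L) • f' w) - w = -((1 / L) • f' w) := by abel
  rw [h1] at hd
  have h2 : ⟪f' w, -((1 / L) • f' w)⟫ = -(1 / L) * ‖f' w‖ ^ 2 := by
    rw [inner_neg_right, real_inner_smul_right, real_inner_self_eq_norm_sq]
    ring
  have h3 : ‖-((1 / L) • f' w)‖ ^ 2 = (1 / L) ^ 2 * ‖f' w‖ ^ 2 := by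
    rw [norm_neg, norm_smul]
    rw [Real.norm_eq_abs, abs_of_nonneg (by positivity : (0:ℝ) ≤ 1 / L)]
    ring
  rw [h2, h3] at hd
  have h4 := hmin (w - (1 / L) • f' w)
  have hL' : L ≠ 0 := ne_of_gt hL
  have : f ystar ≤ f w - 1 / (2 * L) * ‖f' w‖ ^ 2 := by
    calc f ystar ≤ f (w - (1 / L) • f' w) := h4
    _ ≤ f w + -(1 / L) * ‖f' w‖ ^ 2 + L / 2 * ((1 / L) ^ 2 * ‖f' w‖ ^ 2) := hd
    _ = f w - 1 / (2 * L) * ‖f' w‖ ^ 2 := by field_simp; ring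
  have h7 : 1 / (2 * L) * ‖f' w‖ ^ 2 ≤ f w - f ystar := by linarith
  have h8 := mul_le_mul_of_nonneg_left h7 (le_of_lt (by positivity : (0:ℝ) < 2 * L))
  calc ‖f' w‖ ^ 2 = 2 * L * (1 / (2 * L) * ‖f' w‖ ^ 2) := by field_simp
  _ ≤ 2 * L * (f w - f ystar) := h8

lemma weighted_norm_add_sq (μ : ℝ) (hμ : μ ∈ Ioo (0:ℝ) 1) (u v : E) :
    ‖u + v‖ ^ 2 ≤ (1 / μ) * ‖u‖ ^ 2 + (1 / (1 - μ)) * ‖v‖ ^ 2 := by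
  have hexp := norm_add_sq_real u v
  have hcs := real_inner_le_norm u v
  have h1 : 0 < μ := hμ.1
  have h2 : 0 < 1 - μ := by linarith [hμ.2]
  have key : 2 * ⟪u, v⟫ ≤ ((1 - μ) / μ) * ‖u‖ ^ 2 + (μ / (1 - μ)) * ‖v‖ ^ 2 := by
    rw [div_mul_eq_mul_div, div_mul_eq_mul_div, ← sub_nonneg]
    have hpos : 0 < μ * (1 - μ) := mul_pos h1 h2
    have expand : ((1 - μ) * ‖u‖ ^ 2 / μ + μ * ‖v‖ ^ 2 / (1 - μ) - 2 * ⟪u, v⟫)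
        = ((1 - μ) ^ 2 * ‖u‖ ^ 2 + μ ^ 2 * ‖v‖ ^ 2 - 2 * (μ * (1 - μ)) * ⟪u, v⟫) / (μ * (1 - μ)) := by
      field_simp
    rw [expand]
    apply div_nonneg _ (le_of_lt hpos)
    nlinarith [sq_nonneg ((1 - μ) * ‖u‖ - μ * ‖v‖), mul_pos h1 h2]
  have hμinv : (1:ℝ) / μ = 1 + (1 - μ) / μ := by field_simp; ring
  have hμinv2 : (1:ℝ) / (1 - μ) = 1 + μ / (1 - μ) := by field_simp; ring
  rw [hμinv, hμinv2]
  nlinarith [hexp]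

lemma proj_nonexpansive (Y : Set E) (hYconv : Convex ℝ Y)
    (proj : E → E) (hprojY : ∀ z, proj z ∈ Y)
    (hprojnear : ∀ z, ∀ w ∈ Y, ‖z - proj z‖ ≤ ‖z - w‖)
    (z w : E) (hw : w ∈ Y) : ‖proj z - w‖ ≤ ‖z - w‖ := by
  haveI : Nonempty Y := ⟨⟨proj z, hprojY z⟩⟩
  have heq : ‖z - proj z‖ = ⨅ w : Y, ‖z - w‖ := by
    apply le_antisymm
    · exact le_ciInf fun x => hprojnear z x x.2
    · have hbdd : BddBelow (range fun w : Y => ‖z - (w : E)‖) := by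
        refine ⟨0, ?_⟩
        rintro x ⟨v, rfl⟩
        exact norm_nonneg _
      exact ciInf_le hbdd ⟨proj z, hprojY z⟩
  have hvar := (norm_eq_iInf_iff_real_inner_le_zero hYconv (hprojY z)).mp heq w hw
  have hdecomp : z - w = (z - proj z) + (proj z - w) := by abel
  have hexp : ‖z - w‖ ^ 2 = ‖z - proj z‖ ^ 2 + 2 * ⟪z - proj z, proj z - w⟫ + ‖proj z - w‖ ^ 2 := by
    rw [hdecomp, norm_add_sq_real]
  have hip : 0 ≤ ⟪z - proj z, proj z - w⟫ := by
    have : ⟪z - proj z, proj z - w⟫ = -⟪z - proj z, w - proj z⟫ := by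
      rw [← inner_neg_right]
      congr 1
      abel
    rw [this]
    linarith
  nlinarith [norm_nonneg (proj z - w), norm_nonneg (z - w), norm_nonneg (z - proj z)]

lemma sq_le_sq_of' {x G : ℝ} (h0 : 0 ≤ x) (h : x ≤ G) : x ^ 2 ≤ G ^ 2 := by nlinarith

lemma arith_c0 {μ βlow sl Lf bk : ℝ} (h1μ : 0 < 1 - μ) (hβlow : 0 < βlow) (hsl : 0 < sl)
    (hLf : 0 < Lf) (hsllf : Lf * sl < 1) (hb1 : βlow ≤ bk) (hb2 : bk ≤ 1) :
    2 * (1 - μ) * βlow * sl * (1 - Lf * sl) ≤ 2 * ((1 - μ) * bk * sl) * (1 - Lf * bk * sl) := by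
  have hbk0 : 0 < bk := lt_of_lt_of_le hβlow hb1
  have h1 : (1 - μ) * βlow * sl ≤ (1 - μ) * bk * sl :=
    mul_le_mul_of_nonneg_right (mul_le_mul_of_nonneg_left hb1 h1μ.le) hsl.le
  have h2 : 1 - Lf * sl ≤ 1 - Lf * bk * sl := by
    have := mul_le_mul_of_nonneg_right (mul_le_mul_of_nonneg_left hb2 hLf.le) hsl.le
    nlinarith
  have h3 : 0 < 1 - Lf * sl := by linarith
  have ha : 0 ≤ (1 - μ) * bk * sl := by positivity
  have key := mul_le_mul h1 h2 h3.le ha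
  nlinarith [key]

lemma arith_m8 {c0 tk L b s Q : ℝ} (h : c0 ≤ 2 * tk * (1 - L * b * s)) (hQ : 0 ≤ Q) :
    -(2 * tk) * Q + (2 * L * (b * s) * tk) * Q ≤ -c0 * Q := by
  nlinarith [mul_le_mul_of_nonneg_right h hQ]

lemma arith_Keta {K η x : ℝ} (hK : 0 ≤ K) (hx : 0 < x) (hη : η ≤ x / (K + 1)) : K * η ≤ x := by
  have h1 : 0 < K + 1 := by linarith
  have h2 : K * η ≤ K * (x / (K + 1)) := mul_le_mul_of_nonneg_left hη hK
  have h3 : x - K * (x / (K + 1)) = x / (K + 1) := by field_simp; ring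
  have h4 : 0 ≤ x / (K + 1) := by positivity
  linarith

lemma arith_sqlt {d e : ℝ} (hd : 0 ≤ d) (he : 0 < e) (h : d ^ 2 ≤ (e / 2) ^ 2) : d < e := by
  nlinarith

lemma arith_sqle {d e : ℝ} (hd : 0 ≤ d) (he : 0 ≤ e) (h : d ^ 2 ≤ e ^ 2) : d ≤ e := by
  nlinarith

lemma arith_final {G ε d X : ℝ} (hG0 : 0 ≤ G) (hε : 0 < ε) (hd : d ≤ ε / (2 * (G + 1)))
    (hX : X ≤ G * d) : X < ε := by
  have h1 : 0 < 2 * (G + 1) := by linarith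
  have h2 : G * d ≤ G * (ε / (2 * (G + 1))) := mul_le_mul_of_nonneg_left hd hG0
  have h3 : G * (ε / (2 * (G + 1))) = (G * ε) / (2 * (G + 1)) := by ring
  have h4 : (G * ε) / (2 * (G + 1)) < ε := by
    rw [div_lt_iff₀ h1]
    nlinarith
  linarith

set_option maxHeartbeats 1000000 in
theorem stmt5 {m : ℕ}
    (Ψ ψ : EuclideanSpace ℝ (Fin m) → ℝ)
    (Ψ' ψ' : EuclideanSpace ℝ (Fin m) → EuclideanSpace ℝ (Fin m))
    (hΨconv : ConvexOn ℝ univ Ψ) (hψconv : ConvexOn ℝ univ ψ)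
    (hΨgrad : ∀ w, HasGradientAt Ψ (Ψ' w) w) (hψgrad : ∀ w, HasGradientAt ψ (ψ' w) w)
    (LF Lf : ℝ)
    (hΨlip : ∀ a b, ‖Ψ' a - Ψ' b‖ ≤ LF * ‖a - b‖)
    (hψlip : ∀ a b, ‖ψ' a - ψ' b‖ ≤ Lf * ‖a - b‖)
    (Y : Set (EuclideanSpace ℝ (Fin m)))
    (hYne : Y.Nonempty) (hYcpt : IsCompact Y) (hYconv : Convex ℝ Y)
    (su sl μ : ℝ)
    (hsu : su ∈ Ioo 0 (1 / LF)) (hsl : sl ∈ Ioo 0 (1 / Lf)) (hμ : μ ∈ Ioo (0 : ℝ) 1)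
    (α : ℕ → ℝ) (hα : ∀ k, α k ∈ Ioc (0 : ℝ) 1) (hαanti : Antitone α)
    (hαto : Tendsto α atTop (𝓝 0))
    (hαdiv : Tendsto (fun N => ∑ k ∈ Finset.range N, α k) atTop atTop)
    (βlow : ℝ) (hβlow : 0 < βlow)
    (β : ℕ → ℝ) (hβ : ∀ k, β k ∈ Icc βlow 1)
    (proj : EuclideanSpace ℝ (Fin m) → EuclideanSpace ℝ (Fin m))
    (hprojY : ∀ z, proj z ∈ Y)
    (hprojnear : ∀ z, ∀ w ∈ Y, ‖z - proj z‖ ≤ ‖z - w‖)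
    (y : ℕ → EuclideanSpace ℝ (Fin m)) (hy0 : y 0 ∈ Y)
    (hyrec : ∀ k, y (k + 1) =
      proj (y k - ((μ * α k * su) • Ψ' (y k) + ((1 - μ) * β k * sl) • ψ' (y k))))
    (S : Set (EuclideanSpace ℝ (Fin m)))
    (hS : S = {w : EuclideanSpace ℝ (Fin m) | ∀ w', ψ w ≤ ψ w'})
    (Ψstar : ℝ) (hΨstar : Ψstar = sInf (Ψ '' (Y ∩ S)))
    (Shat : Set (EuclideanSpace ℝ (Fin m)))
    (hShat : Shat = {w ∈ Y ∩ S | Ψ w = Ψstar})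
    (hShatne : Shat.Nonempty) :
    Tendsto (fun k => infDist (y k) Shat) atTop (𝓝 0) ∧
    Tendsto (fun k => Ψ (y k)) atTop (𝓝 Ψstar) := by
  obtain ⟨y0s, hy0s⟩ := hShatne
  have hy0s' := hy0s
  rw [hShat] at hy0s'
  have hy0sY : y0s ∈ Y := hy0s'.1.1
  have hy0sS : y0s ∈ S := hy0s'.1.2
  have hy0sΨ : Ψ y0s = Ψstar := hy0s'.2
  set ψstar := ψ y0s with hψstardef
  have hψmin : ∀ w, ψstar ≤ ψ w := by rw [hS] at hy0sS; exact hy0sS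
  -- positivity of constants
  have hLF : 0 < LF := by
    by_contra h
    push_neg at h
    have : 1 / LF ≤ 0 := one_div_nonpos.mpr h
    linarith [hsu.1, hsu.2]
  have hLf : 0 < Lf := by
    by_contra h
    push_neg at h
    have : 1 / Lf ≤ 0 := one_div_nonpos.mpr h
    linarith [hsl.1, hsl.2]
  have hμ0 : 0 < μ := hμ.1
  have h1μ : 0 < 1 - μ := by linarith [hμ.2]
  have hsu0 : 0 < su := hsu.1
  have hsl0 : 0 < sl := hsl.1
  have hsllf : Lf * sl < 1 := by
    have := (lt_div_iff₀ hLf).mp hsl.2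
    linarith
  -- continuity
  have hΨdiff : Differentiable ℝ Ψ := fun w => (hΨgrad w).differentiableAt
  have hΨcont : Continuous Ψ := hΨdiff.continuous
  have hψdiff : Differentiable ℝ ψ := fun w => (hψgrad w).differentiableAt
  have hψcont : Continuous ψ := hψdiff.continuous
  -- S and Shat topology
  have hSalt : S = ψ ⁻¹' (Iic ψstar) := by
    rw [hS]
    ext w
    simp only [mem_setOf_eq, mem_preimage, mem_Iic]
    constructor
    · intro h; exact h y0s
    · intro h w'; exact h.trans (hψmin w')
  have hScl : IsClosed S := by rw [hSalt]; exact isClosed_Iic.preimage hψcont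
  have hShatcl : IsClosed Shat := by
    rw [hShat]
    have heq : {w | w ∈ Y ∩ S ∧ Ψ w = Ψstar} = (Y ∩ S) ∩ {w | Ψ w = Ψstar} := rfl
    rw [heq]
    exact (hYcpt.isClosed.inter hScl).inter (isClosed_eq hΨcont continuous_const)
  have hShatY : Shat ⊆ Y := by rw [hShat]; exact fun w hw => hw.1.1
  have hShatcpt : IsCompact Shat := hYcpt.of_isClosed_subset hShatcl hShatY
  have hShatne' : Shat.Nonempty := ⟨y0s, hy0s⟩
  have hpΨ : ∀ p ∈ Shat, Ψ p = Ψstar := by rw [hShat]; exact fun p hp => hp.2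
  have hpψ : ∀ p ∈ Shat, ψ p = ψstar := by
    intro p hp
    rw [hShat] at hp
    have h1 : p ∈ S := hp.1.2
    rw [hS] at h1
    exact le_antisymm (h1 y0s) (hψmin p)
  have hΨstarle : ∀ w ∈ Y ∩ S, Ψstar ≤ Ψ w := by
    intro w hw
    rw [hΨstar]
    exact csInf_le ((hYcpt.inter_right hScl).image hΨcont).bddBelow (mem_image_of_mem _ hw)
  -- bounds on Y
  obtain ⟨R, hR⟩ := hYcpt.isBounded.subset_closedBall y0s
  have hR0 : 0 ≤ R := by
    have := hR hy0sY
    simpa [mem_closedBall, dist_self] using this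
  have hdistY : ∀ w ∈ Y, ‖w - y0s‖ ≤ R := fun w hw => by
    have := hR hw
    rwa [mem_closedBall, dist_eq_norm] at this
  have hdiam : ∀ w ∈ Y, ∀ p ∈ Y, ‖w - p‖ ≤ 2 * R := by
    intro w hw p hp
    calc ‖w - p‖ = ‖(w - y0s) - (p - y0s)‖ := by congr 1; abel
    _ ≤ ‖w - y0s‖ + ‖p - y0s‖ := norm_sub_le _ _
    _ ≤ 2 * R := by linarith [hdistY w hw, hdistY p hp]
  set G := ‖Ψ' y0s‖ + LF * (2 * R) with hGdef
  have hG : ∀ w ∈ Y, ‖Ψ' w‖ ≤ G := by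
    intro w hw
    calc ‖Ψ' w‖ = ‖Ψ' y0s + (Ψ' w - Ψ' y0s)‖ := by congr 1; abel
    _ ≤ ‖Ψ' y0s‖ + ‖Ψ' w - Ψ' y0s‖ := norm_add_le _ _
    _ ≤ ‖Ψ' y0s‖ + LF * ‖w - y0s‖ := by linarith [hΨlip w y0s]
    _ ≤ G := by
        have := hdistY w hw
        have h2R : ‖w - y0s‖ ≤ 2 * R := by linarith
        nlinarith
  have hG0 : 0 ≤ G := le_trans (norm_nonneg _) (hG y0s hy0sY)
  set B := G * (2 * R) with hBdef
  have hB0 : 0 ≤ B := by positivity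
  have hymem : ∀ k, y k ∈ Y := by
    intro k
    induction k with
    | zero => exact hy0
    | succ n _ => rw [hyrec n]; exact hprojY _
  have hΨgapB : ∀ w ∈ Y, -B ≤ Ψ w - Ψstar := by
    intro w hw
    have hgi := grad_ineq Ψ Ψ' hΨconv hΨgrad y0s w
    have habs : |⟪Ψ' y0s, w - y0s⟫| ≤ ‖Ψ' y0s‖ * ‖w - y0s‖ := abs_real_inner_le_norm _ _
    have h1 : ‖Ψ' y0s‖ ≤ G := hG y0s hy0sY
    have h2 : ‖w - y0s‖ ≤ 2 * R := by linarith [hdistY w hw]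
    have h3 : ‖Ψ' y0s‖ * ‖w - y0s‖ ≤ B := by
      rw [hBdef]
      exact mul_le_mul h1 h2 (norm_nonneg _) hG0
    have h4 : -B ≤ ⟪Ψ' y0s, w - y0s⟫ := by
      have := neg_abs_le ⟪Ψ' y0s, w - y0s⟫
      linarith
    rw [← hy0sΨ]
    linarith
  -- constants
  set c0 := 2 * (1 - μ) * βlow * sl * (1 - Lf * sl) with hc0def
  have hc0 : 0 < c0 := by
    have : 0 < 1 - Lf * sl := by linarith
    positivity
  set K := μ * su ^ 2 * G ^ 2 with hKdef
  have hK0 : 0 ≤ K := by positivity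
  -- key per-step inequality
  have hkey : ∀ k, ∀ p ∈ Shat, ‖y (k + 1) - p‖ ^ 2
      ≤ ‖y k - p‖ ^ 2 - 2 * (μ * su) * α k * (Ψ (y k) - Ψstar)
        - c0 * (ψ (y k) - ψstar) + K * (α k) ^ 2 := by
    intro k p hp
    have hak := hα k
    have hak0 : 0 < α k := hak.1
    have hbk := hβ k
    set tk := (1 - μ) * β k * sl with htkdef
    set c1 := μ * α k * su with hc1def
    have hc1pos : 0 < c1 := by rw [hc1def]; positivity
    have htkpos : 0 < tk := by
      rw [htkdef]
      have : 0 < β k := lt_of_lt_of_le hβlow hbk.1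
      positivity
    set u := c1 • Ψ' (y k) with hudef
    set v := tk • ψ' (y k) with hvdef
    have hz : y (k + 1) = proj (y k - (u + v)) := hyrec k
    have h1 : ‖y (k + 1) - p‖ ≤ ‖(y k - (u + v)) - p‖ := by
      rw [hz]
      exact proj_nonexpansive Y hYconv proj hprojY hprojnear (y k - (u + v)) p (hShatY hp)
    have h1' : ‖y (k + 1) - p‖ ^ 2 ≤ ‖(y k - (u + v)) - p‖ ^ 2 :=
      pow_le_pow_left₀ (norm_nonneg _) h1 2
    have hre : (y k - (u + v)) - p = (y k - p) - (u + v) := by abel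
    have h2 : ‖(y k - p) - (u + v)‖ ^ 2
        = ‖y k - p‖ ^ 2 - 2 * ⟪y k - p, u + v⟫ + ‖u + v‖ ^ 2 := norm_sub_sq_real _ _
    have h3 : ‖u + v‖ ^ 2 ≤ (1 / μ) * ‖u‖ ^ 2 + (1 / (1 - μ)) * ‖v‖ ^ 2 :=
      weighted_norm_add_sq μ hμ u v
    have hiexp : ⟪y k - p, u + v⟫ = c1 * ⟪Ψ' (y k), y k - p⟫ + tk * ⟪ψ' (y k), y k - p⟫ := by
      rw [inner_add_right, hudef, hvdef, real_inner_smul_right, real_inner_smul_right,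
        real_inner_comm (y k - p) (Ψ' (y k)), real_inner_comm (y k - p) (ψ' (y k))]
    -- gradient inequalities
    have hΨi : Ψ (y k) - Ψstar ≤ ⟪Ψ' (y k), y k - p⟫ := by
      have hgi := grad_ineq Ψ Ψ' hΨconv hΨgrad (y k) p
      have hflip : ⟪Ψ' (y k), p - y k⟫ = -⟪Ψ' (y k), y k - p⟫ := by
        rw [← inner_neg_right]
        congr 1
        abel
      rw [hflip] at hgi
      have := hpΨ p hp
      linarith
    have hψi : ψ (y k) - ψstar ≤ ⟪ψ' (y k), y k - p⟫ := by
      have hgi := grad_ineq ψ ψ' hψconv hψgrad (y k) p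
      have hflip : ⟪ψ' (y k), p - y k⟫ = -⟪ψ' (y k), y k - p⟫ := by
        rw [← inner_neg_right]
        congr 1
        abel
      rw [hflip] at hgi
      have := hpψ p hp
      linarith
    have hQ0 : 0 ≤ ψ (y k) - ψstar := by linarith [hψmin (y k)]
    -- norm bounds
    have hnu : ‖u‖ ^ 2 ≤ c1 ^ 2 * G ^ 2 := by
      rw [hudef, norm_smul, mul_pow, Real.norm_eq_abs, sq_abs]
      exact mul_le_mul_of_nonneg_left
        (sq_le_sq_of' (norm_nonneg _) (hG (y k) (hymem k))) (sq_nonneg c1)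
    have hnv : ‖v‖ ^ 2 ≤ tk ^ 2 * (2 * Lf * (ψ (y k) - ψstar)) := by
      rw [hvdef, norm_smul, mul_pow, Real.norm_eq_abs, sq_abs]
      exact mul_le_mul_of_nonneg_left
        (grad_sq_le ψ ψ' Lf hLf hψgrad hψlip y0s hψmin (y k)) (sq_nonneg tk)
    -- combine
    have m1 : c1 * (Ψ (y k) - Ψstar) ≤ c1 * ⟪Ψ' (y k), y k - p⟫ :=
      mul_le_mul_of_nonneg_left hΨi hc1pos.le
    have m2 : tk * (ψ (y k) - ψstar) ≤ tk * ⟪ψ' (y k), y k - p⟫ :=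
      mul_le_mul_of_nonneg_left hψi htkpos.le
    have m5 : (1 / μ) * ‖u‖ ^ 2 ≤ (1 / μ) * (c1 ^ 2 * G ^ 2) :=
      mul_le_mul_of_nonneg_left hnu (by positivity)
    have m6 : (1 / μ) * (c1 ^ 2 * G ^ 2) = K * (α k) ^ 2 := by
      rw [hKdef, hc1def]
      field_simp
    have m4 : (1 / (1 - μ)) * ‖v‖ ^ 2 ≤ (1 / (1 - μ)) * (tk ^ 2 * (2 * Lf * (ψ (y k) - ψstar))) :=
      mul_le_mul_of_nonneg_left hnv (by positivity)
    have m7 : (1 / (1 - μ)) * (tk ^ 2 * (2 * Lf * (ψ (y k) - ψstar)))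
        = (2 * Lf * (β k * sl) * tk) * (ψ (y k) - ψstar) := by
      rw [htkdef]
      field_simp
    have hc0le : c0 ≤ 2 * tk * (1 - Lf * (β k) * sl) := by
      rw [hc0def, htkdef]
      exact arith_c0 h1μ hβlow hsl0 hLf hsllf hbk.1 hbk.2
    have m8 : -(2 * tk) * (ψ (y k) - ψstar) + (2 * Lf * (β k * sl) * tk) * (ψ (y k) - ψstar)
        ≤ -c0 * (ψ (y k) - ψstar) := by
      have h := arith_m8 hc0le hQ0
      linarith [h]
    have hfinal : 2 * (μ * su) * α k * (Ψ (y k) - Ψstar) = 2 * (c1 * (Ψ (y k) - Ψstar)) := by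
      rw [hc1def]; ring
    calc ‖y (k + 1) - p‖ ^ 2 ≤ ‖(y k - (u + v)) - p‖ ^ 2 := h1'
    _ = ‖y k - p‖ ^ 2 - 2 * ⟪y k - p, u + v⟫ + ‖u + v‖ ^ 2 := by rw [hre, h2]
    _ ≤ ‖y k - p‖ ^ 2 - 2 * (c1 * ⟪Ψ' (y k), y k - p⟫ + tk * ⟪ψ' (y k), y k - p⟫)
        + ((1 / μ) * ‖u‖ ^ 2 + (1 / (1 - μ)) * ‖v‖ ^ 2) := by rw [hiexp]; linarith
    _ ≤ ‖y k - p‖ ^ 2 - 2 * (μ * su) * α k * (Ψ (y k) - Ψstar)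
        - c0 * (ψ (y k) - ψstar) + K * (α k) ^ 2 := by
      rw [hfinal]
      have m5' := m5.trans_eq m6
      have m4' := m4.trans_eq m7
      linarith [m1, m2, m5', m4', m8]
  -- D recursion
  set D := fun k => (infDist (y k) Shat) ^ 2 with hDdef
  have hD0 : ∀ k, 0 ≤ D k := fun k => sq_nonneg _
  have hDrec : ∀ k, D (k + 1) ≤ D k - 2 * (μ * su) * α k * (Ψ (y k) - Ψstar)
      - c0 * (ψ (y k) - ψstar) + K * (α k) ^ 2 := by
    intro k
    obtain ⟨p, hp, hpd⟩ := hShatcpt.exists_infDist_eq_dist hShatne' (y k)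
    have h1 : D k = ‖y k - p‖ ^ 2 := by
      simp only [hDdef]
      rw [hpd, dist_eq_norm]
    have h2 : infDist (y (k + 1)) Shat ≤ ‖y (k + 1) - p‖ := by
      rw [← dist_eq_norm]
      exact infDist_le_dist_of_mem hp
    have h3 : D (k + 1) ≤ ‖y (k + 1) - p‖ ^ 2 := by
      simp only [hDdef]
      exact pow_le_pow_left₀ infDist_nonneg h2 2
    have h4 := hkey k p hp
    linarith
  have hQge : ∀ k, 0 ≤ ψ (y k) - ψstar := fun k => by linarith [hψmin (y k)]
  have hPlb : ∀ k, -B ≤ Ψ (y k) - Ψstar := fun k => hΨgapB (y k) (hymem k)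
  set Cd := 2 * (μ * su) * B + K with hCddef
  have hCd0 : 0 ≤ Cd := by positivity
  have hdrift : ∀ k, D (k + 1) ≤ D k + Cd * α k := by
    intro k
    have h1 := hDrec k
    have hak := hα k
    have h2 : (α k) ^ 2 ≤ α k := by nlinarith [hak.1.le, hak.2]
    have h2' := mul_le_mul_of_nonneg_left h2 hK0
    have h3a : -(Ψ (y k) - Ψstar) ≤ B := by linarith [hPlb k]
    have h3 := mul_le_mul_of_nonneg_left h3a
      (mul_nonneg (by positivity : (0:ℝ) ≤ 2 * (μ * su)) hak.1.le)
    have h4 : 0 ≤ c0 * (ψ (y k) - ψstar) := mul_nonneg hc0.le (hQge k)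
    rw [hCddef]
    linarith [h1, h2', h3, h4]
  -- gap lemma
  have hgap : ∀ r : ℝ, 0 < r → ∃ δ : ℝ, 0 < δ ∧ ∀ w ∈ Y, r ≤ (infDist w Shat) ^ 2 →
      δ ≤ max (Ψ w - Ψstar) (ψ w - ψstar) := by
    intro r hr
    set A := {w : EuclideanSpace ℝ (Fin m) | w ∈ Y ∧ r ≤ (infDist w Shat) ^ 2} with hAdef
    have hAsub : A ⊆ Y := fun w hw => hw.1
    have hAcl : IsClosed A := by
      have heq : A = Y ∩ {w | r ≤ (infDist w Shat) ^ 2} := rfl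
      rw [heq]
      exact hYcpt.isClosed.inter
        (isClosed_le continuous_const ((continuous_infDist_pt Shat).pow 2))
    have hAcpt : IsCompact A := hYcpt.of_isClosed_subset hAcl hAsub
    by_cases hA : A.Nonempty
    · obtain ⟨w₀, hw₀A, hw₀min⟩ := hAcpt.exists_isMinOn hA
        (((hΨcont.sub continuous_const).max (hψcont.sub continuous_const)).continuousOn)
      refine ⟨max (Ψ w₀ - Ψstar) (ψ w₀ - ψstar), ?_, ?_⟩
      · by_contra hcon
        push_neg at hcon
        have h1 : ψ w₀ - ψstar ≤ 0 := le_trans (le_max_right _ _) hcon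
        have h2 : Ψ w₀ - Ψstar ≤ 0 := le_trans (le_max_left _ _) hcon
        have hw₀S : w₀ ∈ S := by
          rw [hSalt]
          simp only [mem_preimage, mem_Iic]
          linarith
        have hge : Ψstar ≤ Ψ w₀ := hΨstarle w₀ ⟨hw₀A.1, hw₀S⟩
        have hw₀Shat : w₀ ∈ Shat := by
          rw [hShat]
          exact ⟨⟨hw₀A.1, hw₀S⟩, le_antisymm (by linarith) hge⟩
        have hzero : infDist w₀ Shat = 0 := infDist_zero_of_mem hw₀Shat
        have hr2 := hw₀A.2
        rw [hzero] at hr2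
        norm_num at hr2
        linarith
      · intro w hw hwr
        exact hw₀min (show w ∈ A from ⟨hw, hwr⟩)
    · exact ⟨1, one_pos, fun w hw hwr => absurd (⟨w, ⟨hw, hwr⟩⟩ : A.Nonempty) hA⟩
  -- main claim
  have hmain : ∀ ε : ℝ, 0 < ε → ∃ N, ∀ k, N ≤ k → D k ≤ ε := by
    intro ε hε
    obtain ⟨δ, hδ0, hδ⟩ := hgap (ε / 2) (by linarith)
    set ρ := min (μ * su * δ) (c0 * δ / 2) with hρdef
    have hρ0 : 0 < ρ := lt_min (by positivity) (by positivity)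
    set η := min (min ((ε / 2) / (Cd + 1)) ((μ * su * δ) / (K + 1))) ((c0 * δ / 2) / (Cd + 1))
      with hηdef
    have hη0 : 0 < η := lt_min (lt_min (by positivity) (by positivity)) (by positivity)
    obtain ⟨N₀, hN₀⟩ := eventually_atTop.mp (hαto.eventually_lt_const hη0)
    have hKη : K * η ≤ μ * su * δ :=
      arith_Keta hK0 (by positivity)
        (le_trans (le_trans (min_le_left _ _) (min_le_right _ _)) le_rfl)
    have hCdη1 : Cd * η ≤ ε / 2 :=
      arith_Keta hCd0 (by positivity)
        (le_trans (min_le_left _ _) (min_le_left _ _))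
    have hCdη2 : Cd * η ≤ c0 * δ / 2 :=
      arith_Keta hCd0 (by positivity) (min_le_right _ _)
    have hstep1 : ∀ k, N₀ ≤ k → ε / 2 ≤ D k → D (k + 1) ≤ D k - ρ * α k := by
      intro k hk hDk
      have hak := hα k
      have hαη : α k ≤ η := (hN₀ k hk).le
      have hmax := hδ (y k) (hymem k) (by simpa [hDdef] using hDk)
      have hrec := hDrec k
      rcases le_max_iff.mp hmax with hcase | hcase
      · have p1 := mul_le_mul_of_nonneg_left hcase
          (mul_nonneg (by positivity : (0:ℝ) ≤ 2 * (μ * su)) hak.1.le)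
        have p2 : 0 ≤ c0 * (ψ (y k) - ψstar) := mul_nonneg hc0.le (hQge k)
        have haa : (α k) ^ 2 ≤ η * α k := by nlinarith [hak.1.le]
        have p3 := mul_le_mul_of_nonneg_left haa hK0
        have p4 := mul_le_mul_of_nonneg_right hKη hak.1.le
        have p5 := mul_le_mul_of_nonneg_right (min_le_left (μ * su * δ) (c0 * δ / 2)) hak.1.le
        rw [← hρdef] at p5
        linarith [hrec, p1, p2, p3, p4, p5]
      · have q1a : -(Ψ (y k) - Ψstar) ≤ B := by linarith [hPlb k]
        have q1 := mul_le_mul_of_nonneg_left q1a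
          (mul_nonneg (by positivity : (0:ℝ) ≤ 2 * (μ * su)) hak.1.le)
        have q2 := mul_le_mul_of_nonneg_left hcase hc0.le
        have haa : (α k) ^ 2 ≤ α k := by nlinarith [hak.1.le, hak.2]
        have q3 := mul_le_mul_of_nonneg_left haa hK0
        have q4 := mul_le_mul_of_nonneg_left hαη
          (add_nonneg (mul_nonneg (by positivity : (0:ℝ) ≤ 2 * (μ * su)) hB0) hK0)
        have q6 : (c0 * δ / 2) * α k ≤ c0 * δ / 2 := by
          nlinarith [hak.2, hak.1.le, hc0.le, hδ0.le, mul_nonneg hc0.le hδ0.le]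
        have q7 := mul_le_mul_of_nonneg_right (min_le_right (μ * su * δ) (c0 * δ / 2)) hak.1.le
        rw [← hρdef] at q7
        have hCdη2' := hCdη2
        rw [hCddef] at hCdη2'
        linarith [hrec, q1, q2, q3, q4, q6, q7, hCdη2']
    have hstep2 : ∀ k, N₀ ≤ k → D k ≤ ε / 2 → D (k + 1) ≤ ε := by
      intro k hk hDk
      have hαη : α k ≤ η := (hN₀ k hk).le
      have h1 := hdrift k
      have h2 := mul_le_mul_of_nonneg_left hαη hCd0
      have h3 : D k + Cd * α k ≤ ε / 2 + ε / 2 := add_le_add hDk (h2.trans hCdη1)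
      calc D (k + 1) ≤ D k + Cd * α k := h1
      _ ≤ ε / 2 + ε / 2 := h3
      _ = ε := by ring
    have hex : ∃ k₁, N₀ ≤ k₁ ∧ D k₁ ≤ ε / 2 := by
      by_contra hcon
      push_neg at hcon
      have hdec : ∀ n : ℕ, D (N₀ + n) + ρ * (∑ i ∈ Finset.range n, α (N₀ + i)) ≤ D N₀ := by
        intro n
        induction n with
        | zero => simp
        | succ n ih =>
          have h1 := hstep1 (N₀ + n) (Nat.le_add_right _ _)
            (le_of_lt (hcon (N₀ + n) (Nat.le_add_right _ _)))
          rw [Finset.sum_range_succ]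
          have heq : N₀ + (n + 1) = (N₀ + n) + 1 := rfl
          rw [heq]
          have h2 : 0 ≤ ρ := hρ0.le
          linarith [h1, ih]
      obtain ⟨M, hM⟩ := eventually_atTop.mp
        (hαdiv.eventually_ge_atTop (∑ i ∈ Finset.range N₀, α i + D N₀ / ρ + 1))
      set N := max M N₀ with hNdef
      have hN₀N : N₀ ≤ N := le_max_right _ _
      have hNs := hM N (le_max_left _ _)
      have hsplit : ∑ k ∈ Finset.range N, α k
          = ∑ k ∈ Finset.range N₀, α k + ∑ i ∈ Finset.range (N - N₀), α (N₀ + i) := by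
        rw [← Finset.sum_range_add]
        have hNN : N₀ + (N - N₀) = N := by omega
        rw [hNN]
      have hdecN := hdec (N - N₀)
      have hNeq : N₀ + (N - N₀) = N := by omega
      rw [hNeq] at hdecN
      rw [hsplit] at hNs
      have hsum_ge : D N₀ / ρ + 1 ≤ ∑ i ∈ Finset.range (N - N₀), α (N₀ + i) := by linarith
      have hDN := hD0 N
      have hmul := mul_le_mul_of_nonneg_left hsum_ge hρ0.le
      have hid : ρ * (D N₀ / ρ) = D N₀ := by field_simp
      linarith [hmul, hid, hDN, hdecN, hρ0]
    obtain ⟨k₁, hk₁N, hk₁D⟩ := hex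
    refine ⟨k₁, ?_⟩
    intro k hk
    induction k, hk using Nat.le_induction with
    | base => linarith
    | succ k hk ih =>
      by_cases hcase : D k ≤ ε / 2
      · exact hstep2 k (le_trans hk₁N hk) hcase
      · push_neg at hcase
        have h1 := hstep1 k (le_trans hk₁N hk) hcase.le
        have h2 : 0 ≤ ρ * α k := mul_nonneg hρ0.le (hα k).1.le
        linarith
  -- conclusions
  have habs : ∀ k, |Ψ (y k) - Ψstar| ≤ G * infDist (y k) Shat := by
    intro k
    obtain ⟨p, hp, hpd⟩ := hShatcpt.exists_infDist_eq_dist hShatne' (y k)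
    have hpY := hShatY hp
    have h1 := grad_ineq Ψ Ψ' hΨconv hΨgrad (y k) p
    have h2 := grad_ineq Ψ Ψ' hΨconv hΨgrad p (y k)
    have hb1 : |⟪Ψ' (y k), p - y k⟫| ≤ G * dist (y k) p := by
      have := abs_real_inner_le_norm (Ψ' (y k)) (p - y k)
      have hn : ‖p - y k‖ = dist (y k) p := by rw [dist_eq_norm, norm_sub_rev]
      rw [hn] at this
      have := this.trans (mul_le_mul_of_nonneg_right (hG (y k) (hymem k)) dist_nonneg)
      linarith [this]
    have hb2 : |⟪Ψ' p, y k - p⟫| ≤ G * dist (y k) p := by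
      have := abs_real_inner_le_norm (Ψ' p) (y k - p)
      have hn : ‖y k - p‖ = dist (y k) p := by rw [dist_eq_norm]
      rw [hn] at this
      have := this.trans (mul_le_mul_of_nonneg_right (hG p hpY) dist_nonneg)
      linarith [this]
    have hpΨ' : Ψ p = Ψstar := hpΨ p hp
    rw [hpd]
    rw [abs_le]
    constructor
    · have := abs_le.mp hb2
      linarith [this.1]
    · have := abs_le.mp hb1
      linarith [(abs_le.mp hb1).1]
  constructor
  · rw [Metric.tendsto_atTop]
    intro ε hε
    obtain ⟨N, hN⟩ := hmain ((ε / 2) ^ 2) (by positivity)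
    refine ⟨N, fun k hk => ?_⟩
    have hDk := hN k hk
    rw [Real.dist_eq, sub_zero, abs_of_nonneg infDist_nonneg]
    exact arith_sqlt infDist_nonneg hε (by simpa [hDdef] using hDk)
  · rw [Metric.tendsto_atTop]
    intro ε hε
    obtain ⟨N, hN⟩ := hmain ((ε / (2 * (G + 1))) ^ 2) (by positivity)
    refine ⟨N, fun k hk => ?_⟩
    have hDk := hN k hk
    have hdle : infDist (y k) Shat ≤ ε / (2 * (G + 1)) :=
      arith_sqle infDist_nonneg (by positivity) (by simpa [hDdef] using hDk)
    rw [Real.dist_eq]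
    exact arith_final hG0 hε hdle (habs k)
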